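/- Let p be an odd prime and let ξ₄ ∈ ℚₚ/ℤₚ with |ξ₄|ₚ = p^m, m ≥ 1. The functions χ_{ξ₂,ξ₄}(x) on ℤₚ⁴ defined by χ(x) := p^m·e^{2πi{ξ₂x₂+ξ₄x₄}ₚ}·1_{p^mℤₚ}(x₁)·∫_{ℤₚ} e^{2πi{ξ₄x₃u+ξ₄x₂u²/2}ₚ}du satisfy ∫_{ℤₚ⁴}|χ(x)|²dx = 1. -/

import Mathlib

open MeasureTheory
open scoped Classical

set_option linter.unusedSectionVars false
set_option linter.unusedVariables false
set_option maxHeartbeats 1000000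

section aux
variable {p : ℕ} [Fact p.Prime] [MeasurableSpace ℤ_[p]] [BorelSpace ℤ_[p]]
  (μ : Measure ℤ_[p])
  (hμ_inv : ∀ (a : ℤ_[p]) (s : Set ℤ_[p]), μ ((a + ·) ⁻¹' s) = μ s)
  (hμ_norm : μ Set.univ = 1)
  {e : ℚ_[p] → ℂ}
  (he_add : ∀ x y, e (x + y) = e x * e y)
  (he_abs : ∀ x, ‖e x‖ = 1)
  (he_ker : ∀ x, e x = 1 ↔ ‖x‖ ≤ 1)

include he_add he_abs in
lemma e_ne_zero (x : ℚ_[p]) : e x ≠ 0 := by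
  intro h; have := he_abs x; rw [h] at this; simp at this

include he_add he_abs in
lemma e_zero : e 0 = 1 := by
  have h := he_add 0 0
  rw [add_zero] at h
  have := e_ne_zero he_add he_abs 0
  field_simp at h
  exact h.symm

include he_add he_abs in
lemma e_conj' (x : ℚ_[p]) : (starRingEnd ℂ) (e x) = e (-x) := by
  have h1 : e x * e (-x) = 1 := by rw [← he_add]; simp [e_zero he_add he_abs]
  have h2 : e x * (starRingEnd ℂ) (e x) = 1 := by
    rw [Complex.mul_conj, Complex.normSq_eq_norm_sq, he_abs]; norm_num
  exact mul_left_cancel₀ (e_ne_zero he_add he_abs x) (h2.trans h1.symm)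

include he_add he_ker in
lemma e_cont'' : Continuous e := by
  rw [continuous_iff_continuousAt]
  intro x
  have h : (fun _ : ℚ_[p] => e x) =ᶠ[nhds x] e := by
    filter_upwards [Metric.ball_mem_nhds x one_pos] with y hy
    rw [Metric.mem_ball, dist_eq_norm] at hy
    have : e y = e (x + (y - x)) := by ring_nf
    rw [this, he_add, (he_ker _).2 hy.le, mul_one]
  exact continuousAt_const.congr h

include hμ_inv in
lemma map_add_eq (a : ℤ_[p]) : μ.map (a + ·) = μ := by
  ext s hs
  rw [Measure.map_apply (measurable_const_add a) hs]
  exact hμ_inv a s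

include hμ_inv in
lemma integral_translate (a : ℤ_[p]) (f : ℤ_[p] → ℂ)
    (hf : AEStronglyMeasurable f μ) :
    ∫ x, f (a + x) ∂μ = ∫ x, f x ∂μ := by
  conv_rhs => rw [← map_add_eq μ hμ_inv a]
  rw [integral_map (measurable_const_add a).aemeasurable]
  rwa [map_add_eq μ hμ_inv a]

include hμ_inv hμ_norm in
lemma measure_ball_eq' (m : ℕ) :
    μ {x : ℤ_[p] | ‖x‖ ≤ (p : ℝ) ^ (-(m : ℤ))} = ((p : ENNReal) ^ m)⁻¹ := by
  set B : Set ℤ_[p] := {x : ℤ_[p] | ‖x‖ ≤ (p : ℝ) ^ (-(m : ℤ))} with hB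
  have hBmeas : MeasurableSet B := by
    have : B = Metric.closedBall 0 ((p : ℝ) ^ (-(m : ℤ))) := by
      ext x; simp [hB, Metric.mem_closedBall, dist_eq_norm]
    rw [this]; exact measurableSet_closedBall
  set S : ℕ → Set ℤ_[p] := fun k => ((-(k : ℤ_[p])) + ·) ⁻¹' B with hS
  have hmemS : ∀ (k : ℕ) (x : ℤ_[p]), x ∈ S k ↔ ‖x - (k : ℤ_[p])‖ ≤ (p : ℝ) ^ (-(m : ℤ)) := by
    intro k x
    simp only [hS, Set.mem_preimage, hB, Set.mem_setOf_eq]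
    constructor <;> intro h <;> [rwa [neg_add_eq_sub] at h; rwa [neg_add_eq_sub]]
  have hSmeas : ∀ k, MeasurableSet (S k) :=
    fun k => hBmeas.preimage (measurable_const_add _)
  have hcover : Set.univ = ⋃ k ∈ Finset.range (p ^ m), S k := by
    ext x
    simp only [Set.mem_univ, true_iff, Set.mem_iUnion, Finset.mem_range]
    refine ⟨x.appr m, x.appr_lt m, ?_⟩
    rw [hmemS]
    rw [PadicInt.norm_le_pow_iff_mem_span_pow]
    exact x.appr_spec m
  have hdisj : (Finset.range (p ^ m) : Set ℕ).PairwiseDisjoint S := by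
    intro k hk l hl hkl
    simp only [Finset.coe_range, Set.mem_Iio] at hk hl
    rw [Function.onFun, Set.disjoint_left]
    intro x hx hx'
    rw [hmemS] at hx hx'
    have hcast : (((k : ℤ) - (l : ℤ) : ℤ) : ℤ_[p]) = (k : ℤ_[p]) - (l : ℤ_[p]) := by
      push_cast; ring
    have hnorm : ‖(((k : ℤ) - (l : ℤ) : ℤ) : ℤ_[p])‖ ≤ (p : ℝ) ^ (-(m : ℤ)) := by
      rw [hcast]
      have := PadicInt.nonarchimedean ((k : ℤ_[p]) - x) (x - (l : ℤ_[p]))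
      have heq : (k : ℤ_[p]) - x + (x - l) = (k : ℤ_[p]) - l := by ring
      rw [heq] at this
      refine this.trans (max_le ?_ ?_)
      · rwa [norm_sub_rev]
      · exact hx'
    rw [PadicInt.norm_int_le_pow_iff_dvd] at hnorm
    have hk' : (k : ℤ) < (p : ℤ) ^ m := by exact_mod_cast hk
    have hl' : (l : ℤ) < (p : ℤ) ^ m := by exact_mod_cast hl
    have hz : ((k : ℤ) - l) = 0 :=
      Int.eq_zero_of_abs_lt_dvd hnorm (by rw [abs_sub_lt_iff]; omega)
    omega
  have hsum : μ Set.univ = ∑ k ∈ Finset.range (p ^ m), μ (S k) := by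
    rw [hcover]
    exact measure_biUnion_finset hdisj fun k _ => hSmeas k
  have hSB : ∀ k, μ (S k) = μ B := fun k => hμ_inv _ _
  rw [hμ_norm] at hsum
  simp only [hSB, Finset.sum_const, Finset.card_range, nsmul_eq_mul] at hsum
  have hp0 : ((p ^ m : ℕ) : ENNReal) ≠ 0 := by
    simp [pow_ne_zero, Nat.Prime.ne_zero Fact.out]
  have hptop : ((p ^ m : ℕ) : ENNReal) ≠ ⊤ := ENNReal.natCast_ne_top _
  have hfin : μ B = ((p ^ m : ℕ) : ENNReal)⁻¹ := by
    calc μ B = ((p ^ m : ℕ) : ENNReal)⁻¹ * (((p ^ m : ℕ) : ENNReal) * μ B) := by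
          rw [← mul_assoc, ENNReal.inv_mul_cancel hp0 hptop, one_mul]
      _ = ((p ^ m : ℕ) : ENNReal)⁻¹ := by rw [← hsum, mul_one]
  rw [hfin]; norm_cast

include hμ_inv hμ_norm he_add he_abs he_ker in
lemma char_int' (c : ℚ_[p]) :
    ∫ x : ℤ_[p], e (c * (x : ℚ_[p])) ∂μ = if ‖c‖ ≤ 1 then 1 else 0 := by
  have : IsProbabilityMeasure μ := ⟨hμ_norm⟩
  have hcont : Continuous (fun x : ℤ_[p] => e (c * (x : ℚ_[p]))) :=
    (e_cont'' he_add he_ker).comp (continuous_const.mul continuous_subtype_val)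
  split_ifs with hc
  · have hone : ∀ x : ℤ_[p], e (c * (x : ℚ_[p])) = 1 := by
      intro x
      refine (he_ker _).2 ?_
      rw [norm_mul]
      calc ‖c‖ * ‖(x : ℚ_[p])‖ ≤ 1 * 1 :=
            mul_le_mul hc (by rw [← PadicInt.norm_def]; exact x.norm_le_one)
              (norm_nonneg _) zero_le_one
        _ = 1 := one_mul 1
    simp only [hone]
    simp
  · set I := ∫ x : ℤ_[p], e (c * (x : ℚ_[p])) ∂μ with hI
    have htrans : ∫ x : ℤ_[p], e (c * (((1 : ℤ_[p]) + x : ℤ_[p]) : ℚ_[p])) ∂μ = I :=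
      integral_translate μ hμ_inv 1 _ hcont.aestronglyMeasurable
    have heq : ∀ x : ℤ_[p],
        e (c * (((1 : ℤ_[p]) + x : ℤ_[p]) : ℚ_[p])) = e c * e (c * (x : ℚ_[p])) := by
      intro x
      rw [← he_add]
      congr 1
      push_cast
      ring
    simp only [heq] at htrans
    rw [integral_const_mul] at htrans
    have hec : e c ≠ 1 := fun h => hc ((he_ker c).1 h)
    have : (e c - 1) * I = 0 := by rw [sub_mul, one_mul, htrans, sub_self]
    rcases mul_eq_zero.1 this with h | h
    · exact absurd (sub_eq_zero.mp h) hec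
    · exact h

lemma integrable_bdd {α : Type*} [MeasurableSpace α] {ν : Measure α} [IsFiniteMeasure ν]
    {E : Type*} [NormedAddCommGroup E] {f : α → E} {C : ℝ}
    (hf : AEStronglyMeasurable f ν) (hb : ∀ x, ‖f x‖ ≤ C) : Integrable f ν :=
  (integrable_const C).mono' hf (Filter.Eventually.of_forall hb)

include he_abs in
lemma e_norm (x : ℚ_[p]) : ‖e x‖ = 1 := by rw [he_abs]

include hμ_norm he_abs in
lemma norm_int_le_one' (g : ℤ_[p] → ℂ) (hg : ∀ x, ‖g x‖ ≤ 1) :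
    ‖∫ x, g x ∂μ‖ ≤ 1 := by
  have : IsProbabilityMeasure μ := ⟨hμ_norm⟩
  simpa using norm_integral_le_of_norm_le_const (μ := μ) (C := 1) (Filter.Eventually.of_forall hg)

include hμ_inv hμ_norm he_add he_abs he_ker in
lemma gauss_L2_inner (hp : Odd p) (ξ₄ : ℚ_[p]) (m : ℕ)
    (hξ₄ : ‖ξ₄‖ = (p : ℝ) ^ (m : ℤ)) (x₂ : ℤ_[p]) :
    ∫ x₃ : ℤ_[p], (‖(∫ u : ℤ_[p],
        e (ξ₄ * (x₃ : ℚ_[p]) * (u : ℚ_[p]) + ξ₄ * (x₂ : ℚ_[p]) * (u : ℚ_[p]) ^ 2 / 2) ∂μ)‖) ^ 2 ∂μ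
      = (p : ℝ) ^ (-(m : ℤ)) := by
  have : IsProbabilityMeasure μ := ⟨hμ_norm⟩
  have hecont : Continuous e := e_cont'' he_add he_ker
  have hcoe : Continuous (fun x : ℤ_[p] => (x : ℚ_[p])) := continuous_subtype_val
  -- the phase
  set a : ℤ_[p] → ℤ_[p] → ℚ_[p] :=
    fun x₃ t => ξ₄ * (x₃ : ℚ_[p]) * (t : ℚ_[p]) + ξ₄ * (x₂ : ℚ_[p]) * (t : ℚ_[p]) ^ 2 / 2 with ha
  set f : ℤ_[p] → ℤ_[p] → ℤ_[p] → ℂ := fun x₃ u v => e (a x₃ u - a x₃ v) with hf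
  set G : ℤ_[p] → ℂ := fun x₃ => ∫ u : ℤ_[p], e (a x₃ u) ∂μ with hG
  -- continuity of the 3-variable integrand
  have hacont : Continuous (fun q : ℤ_[p] × ℤ_[p] => a q.1 q.2) := by
    apply Continuous.add
    · exact (continuous_const.mul (hcoe.comp continuous_fst)).mul (hcoe.comp continuous_snd)
    · exact (continuous_const.mul ((hcoe.comp continuous_snd).pow 2)).div_const 2
  have hfcont : Continuous (fun q : ℤ_[p] × ℤ_[p] × ℤ_[p] => f q.1 q.2.1 q.2.2) := by
    apply hecont.comp
    apply Continuous.sub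
    · exact hacont.comp (continuous_fst.prodMk (continuous_fst.comp continuous_snd))
    · exact hacont.comp (continuous_fst.prodMk ((continuous_snd.comp continuous_snd)))
  have hfnorm : ∀ x₃ u v, ‖f x₃ u v‖ = 1 := fun x₃ u v => e_norm he_abs _
  -- continuity of the partial integral in (x₃, u)
  have h1cont : Continuous (fun q : ℤ_[p] × ℤ_[p] => ∫ v, f q.1 q.2 v ∂μ) := by
    apply continuous_of_dominated (bound := fun _ => (1 : ℝ))
    · intro q
      exact (hfcont.comp
        (continuous_const.prodMk (continuous_const.prodMk continuous_id))).aestronglyMeasurable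
    · intro q
      exact Filter.Eventually.of_forall fun v => le_of_eq (hfnorm _ _ _)
    · exact integrable_const 1
    · exact Filter.Eventually.of_forall fun v =>
        hfcont.comp (continuous_fst.prodMk (continuous_snd.prodMk continuous_const))
  have h1norm : ∀ q : ℤ_[p] × ℤ_[p], ‖∫ v, f q.1 q.2 v ∂μ‖ ≤ 1 :=
    fun q => norm_int_le_one' μ hμ_norm he_abs _ (fun v => le_of_eq (hfnorm _ _ _))
  -- |G|² as a double integral
  have hGsq : ∀ x₃, ((‖G x₃‖) ^ 2 : ℝ) = (∫ u, ∫ v, f x₃ u v ∂μ ∂μ).re := by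
    intro x₃
    have h1 : (‖G x₃‖) ^ 2 = (G x₃ * (starRingEnd ℂ) (G x₃)).re := by
      rw [Complex.mul_conj]; simp [Complex.sq_norm]
    rw [h1]
    congr 1
    have hconj : (starRingEnd ℂ) (G x₃) = ∫ v, e (-(a x₃ v)) ∂μ := by
      show (starRingEnd ℂ) (∫ u : ℤ_[p], e (a x₃ u) ∂μ) = _
      rw [← integral_conj]
      congr 1; funext v; exact e_conj' he_add he_abs _
    show (∫ u : ℤ_[p], e (a x₃ u) ∂μ) * (starRingEnd ℂ) (G x₃) = _
    rw [hconj, ← integral_mul_const]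
    congr 1; funext u
    rw [← integral_const_mul]
    congr 1; funext v
    show e (a x₃ u) * e (-(a x₃ v)) = e (a x₃ u - a x₃ v)
    rw [← he_add]; congr 1; ring
  -- oddness of p
  have hp2 : p ≠ 2 := by rintro rfl; exact (by norm_num : ¬ Odd 2) hp
  have h2 : ‖(2 : ℚ_[p])‖ = 1 := by
    have hnd : ¬ ((p : ℤ) ∣ 2) := by
      intro hdvd
      have h := Int.le_of_dvd (by norm_num) hdvd
      have hp2' : 2 ≤ (p : ℤ) := by exact_mod_cast (Fact.out : p.Prime).two_le
      exact hp2 (by exact_mod_cast le_antisymm h hp2')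
    have hcast : ((2 : ℤ) : ℚ_[p]) = (2 : ℚ_[p]) := by push_cast; ring
    refine le_antisymm (by rw [← hcast]; exact Padic.norm_int_le_one 2) ?_
    by_contra hlt
    push_neg at hlt
    exact hnd ((Padic.norm_intCast_lt_one_iff (k := 2)).1 (by rwa [hcast]))
  -- the inner x₃-integral
  have hppos : (0 : ℝ) < (p : ℝ) ^ (m : ℤ) :=
    zpow_pos (by exact_mod_cast (Fact.out : p.Prime).pos) _
  have hdelta : ∀ u v : ℤ_[p], (∫ x₃, f x₃ u v ∂μ)
      = if ‖u - v‖ ≤ (p : ℝ) ^ (-(m : ℤ)) then 1 else 0 := by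
    intro u v
    set c : ℚ_[p] := ξ₄ * ((u : ℚ_[p]) - (v : ℚ_[p])) with hc
    set Bq : ℚ_[p] := ξ₄ * (x₂ : ℚ_[p]) * ((u : ℚ_[p]) ^ 2 - (v : ℚ_[p]) ^ 2) / 2 with hBdef
    have hsplit : ∀ x₃ : ℤ_[p], f x₃ u v = e (c * (x₃ : ℚ_[p])) * e Bq := by
      intro x₃
      show e (a x₃ u - a x₃ v) = _
      rw [← he_add]; congr 1
      simp only [ha, hc, hBdef]; ring
    simp_rw [hsplit]
    rw [integral_mul_const, char_int' μ hμ_inv hμ_norm he_add he_abs he_ker c]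
    have hcnorm : ‖c‖ = (p : ℝ) ^ (m : ℤ) * ‖u - v‖ := by
      have hcast : (u : ℚ_[p]) - (v : ℚ_[p]) = ((u - v : ℤ_[p]) : ℚ_[p]) := by push_cast; ring
      rw [hc, norm_mul, hξ₄, hcast, ← PadicInt.norm_def]
    have hcond : (‖c‖ ≤ 1) ↔ (‖u - v‖ ≤ (p : ℝ) ^ (-(m : ℤ))) := by
      rw [hcnorm, zpow_neg, ← one_div, le_div_iff₀ hppos, mul_comm]
    by_cases hle : ‖u - v‖ ≤ (p : ℝ) ^ (-(m : ℤ))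
    · rw [if_pos hle, if_pos (hcond.mpr hle), one_mul]
      apply (he_ker _).2
      have hBfac : Bq = c * (((x₂ * (u + v) : ℤ_[p]) : ℚ_[p]) * (2 : ℚ_[p])⁻¹) := by
        simp only [hc, hBdef]; push_cast; ring
      rw [hBfac, norm_mul]
      have hX : ‖((x₂ * (u + v) : ℤ_[p]) : ℚ_[p]) * (2 : ℚ_[p])⁻¹‖ ≤ 1 := by
        rw [norm_mul, norm_inv, h2, inv_one, mul_one, ← PadicInt.norm_def]
        exact PadicInt.norm_le_one _
      have hc1 : ‖c‖ ≤ 1 := hcond.mpr hle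
      nlinarith [norm_nonneg c, norm_nonneg (((x₂ * (u + v) : ℤ_[p]) : ℚ_[p]) * (2 : ℚ_[p])⁻¹)]
    · rw [if_neg hle, if_neg (fun h => hle (hcond.mp h)), zero_mul]
  -- swap the integrals
  have hswap2 : ∀ u, Integrable (Function.uncurry (fun x₃ v => f x₃ u v)) (μ.prod μ) := fun u =>
    integrable_bdd ((hfcont.comp (continuous_fst.prodMk
      (continuous_const.prodMk continuous_snd)))).aestronglyMeasurable
      (fun q => le_of_eq (hfnorm _ _ _))
  have hswap1 : Integrable (Function.uncurry (fun x₃ u => ∫ v, f x₃ u v ∂μ)) (μ.prod μ) :=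
    integrable_bdd h1cont.aestronglyMeasurable h1norm
  have hswap : (∫ x₃, ∫ u, ∫ v, f x₃ u v ∂μ ∂μ ∂μ) = ∫ u, ∫ v, ∫ x₃, f x₃ u v ∂μ ∂μ ∂μ := by
    rw [integral_integral_swap hswap1]
    congr 1; funext u
    exact integral_integral_swap (hswap2 u)
  -- continuity and integrability of the double integral
  have hWcont : Continuous (fun x₃ : ℤ_[p] => ∫ u, ∫ v, f x₃ u v ∂μ ∂μ) := by
    apply continuous_of_dominated (bound := fun _ => (1 : ℝ))
    · intro x₃
      exact (h1cont.comp (continuous_const.prodMk continuous_id)).aestronglyMeasurable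
    · intro x₃
      exact Filter.Eventually.of_forall fun u => h1norm (x₃, u)
    · exact integrable_const 1
    · exact Filter.Eventually.of_forall fun u =>
        h1cont.comp (continuous_id.prodMk continuous_const)
  have hWint : Integrable (fun x₃ => ∫ u, ∫ v, f x₃ u v ∂μ ∂μ) μ :=
    integrable_bdd hWcont.aestronglyMeasurable
      (fun x₃ => norm_int_le_one' μ hμ_norm he_abs _ (fun u => h1norm (x₃, u)))
  -- the v-integral of the indicator
  have hball : MeasurableSet {x : ℤ_[p] | ‖x‖ ≤ (p : ℝ) ^ (-(m : ℤ))} := by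
    have : {x : ℤ_[p] | ‖x‖ ≤ (p : ℝ) ^ (-(m : ℤ))}
        = Metric.closedBall 0 ((p : ℝ) ^ (-(m : ℤ))) := by
      ext x; simp [Metric.mem_closedBall, dist_eq_norm]
    rw [this]; exact measurableSet_closedBall
  have htoReal : (((p : ENNReal) ^ m)⁻¹).toReal = (p : ℝ) ^ (-(m : ℤ)) := by
    have hh : ((p : ENNReal) ^ m).toReal = (p : ℝ) ^ m := by simp
    rw [ENNReal.toReal_inv, hh, zpow_neg, zpow_natCast]
  have heps : ∀ u : ℤ_[p], (∫ v, (if ‖u - v‖ ≤ (p : ℝ) ^ (-(m : ℤ)) then (1 : ℂ) else 0) ∂μ)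
      = (((p : ℝ) ^ (-(m : ℤ)) : ℝ) : ℂ) := by
    intro u
    have hSind : ∀ v : ℤ_[p], (if ‖u - v‖ ≤ (p : ℝ) ^ (-(m : ℤ)) then (1 : ℂ) else 0)
        = Set.indicator (((-u) + ·) ⁻¹' {x : ℤ_[p] | ‖x‖ ≤ (p : ℝ) ^ (-(m : ℤ))})
            (fun _ => (1 : ℂ)) v := by
      intro v
      have hrw : ‖-u + v‖ = ‖u - v‖ := by
        rw [show -u + v = -(u - v) by ring, norm_neg]
      by_cases hv : ‖u - v‖ ≤ (p : ℝ) ^ (-(m : ℤ))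
      · rw [if_pos hv, Set.indicator_of_mem]
        exact (by rw [Set.mem_preimage, Set.mem_setOf_eq, hrw]; exact hv)
      · rw [if_neg hv, Set.indicator_of_notMem]
        rw [Set.mem_preimage, Set.mem_setOf_eq, hrw]
        exact hv
    simp_rw [hSind]
    rw [integral_indicator_const _ (hball.preimage (measurable_const_add _))]
    rw [measureReal_def, hμ_inv, measure_ball_eq' μ hμ_inv hμ_norm m, htoReal]
    rw [Complex.real_smul, mul_one]
  -- final computation
  suffices h : ∫ x₃, (‖G x₃‖) ^ 2 ∂μ = (p : ℝ) ^ (-(m : ℤ)) by exact h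
  calc ∫ x₃, (‖G x₃‖) ^ 2 ∂μ
      = ∫ x₃, (∫ u, ∫ v, f x₃ u v ∂μ ∂μ).re ∂μ := by simp_rw [hGsq]
    _ = (∫ x₃, ∫ u, ∫ v, f x₃ u v ∂μ ∂μ ∂μ).re := by
        have h := integral_re hWint
        simp only [RCLike.re_to_complex] at h
        exact h
    _ = (∫ u, ∫ v, ∫ x₃, f x₃ u v ∂μ ∂μ ∂μ).re := by rw [hswap]
    _ = (∫ u : ℤ_[p], (((p : ℝ) ^ (-(m : ℤ)) : ℝ) : ℂ) ∂μ).re := by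
        congr 1
        congr 1; funext u
        rw [show (∫ v, ∫ x₃, f x₃ u v ∂μ ∂μ)
            = ∫ v, (if ‖u - v‖ ≤ (p : ℝ) ^ (-(m : ℤ)) then (1 : ℂ) else 0) ∂μ by
          congr 1; funext v; exact hdelta u v]
        exact heps u
    _ = (p : ℝ) ^ (-(m : ℤ)) := by
        rw [integral_const, measureReal_def, measure_univ, ENNReal.toReal_one, one_smul, Complex.ofReal_re]
end aux

/-- for an odd prime `p` and `ξ₄ ∈ ℚₚ/ℤₚ` with `|ξ₄|ₚ = p^m`,
`m ≥ 1`, the character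
`χ(x) = p^m·e^{2πi{ξ₂x₂+ξ₄x₄}ₚ}·𝟙_{p^mℤₚ}(x₁)·∫_{ℤₚ} e^{2πi{ξ₄x₃u+ξ₄x₂u²/2}ₚ}du`
on `ℤₚ⁴` satisfies `∫_{ℤₚ⁴} |χ(x)|² dx = 1`. -/
theorem engel_mixed_character_L2 (p : ℕ) [Fact p.Prime] (hp : Odd p)
    [MeasurableSpace ℤ_[p]] [BorelSpace ℤ_[p]]
    (μ : Measure ℤ_[p])
    (hμ_inv : ∀ (a : ℤ_[p]) (s : Set ℤ_[p]), μ ((a + ·) ⁻¹' s) = μ s)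
    (hμ_norm : μ Set.univ = 1)
    (e : ℚ_[p] → ℂ)
    (he_add : ∀ x y, e (x + y) = e x * e y)
    (he_abs : ∀ x, ‖e x‖ = 1)
    (he_ker : ∀ x, e x = 1 ↔ ‖x‖ ≤ 1)
    (ξ₂ ξ₄ : ℚ_[p]) (m : ℕ) (hm : 1 ≤ m) (hξ₄ : ‖ξ₄‖ = (p : ℝ) ^ (m : ℤ)) :
    ∫ x : ℤ_[p] × ℤ_[p] × ℤ_[p] × ℤ_[p],
        (‖(((p : ℂ) ^ (m : ℕ)) *
          e (ξ₂ * (x.2.1 : ℚ_[p]) + ξ₄ * (x.2.2.2 : ℚ_[p])) *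
          (if ‖x.1‖ ≤ (p : ℝ) ^ (-(m : ℤ)) then 1 else 0) *
          ∫ u : ℤ_[p],
            e (ξ₄ * (x.2.2.1 : ℚ_[p]) * (u : ℚ_[p]) +
              ξ₄ * (x.2.1 : ℚ_[p]) * (u : ℚ_[p]) ^ 2 / 2) ∂μ)‖) ^ 2
        ∂(μ.prod (μ.prod (μ.prod μ))) = 1 := by
  have hprob : IsProbabilityMeasure μ := ⟨hμ_norm⟩
  have hecont : Continuous e := e_cont'' he_add he_ker
  have hcoe : Continuous (fun x : ℤ_[p] => (x : ℚ_[p])) := continuous_subtype_val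
  set r : ℝ := (p : ℝ) ^ (-(m : ℤ)) with hr
  set G : ℤ_[p] × ℤ_[p] → ℂ := fun y =>
    ∫ u : ℤ_[p], e (ξ₄ * (y.2 : ℚ_[p]) * (u : ℚ_[p]) + ξ₄ * (y.1 : ℚ_[p]) * (u : ℚ_[p]) ^ 2 / 2) ∂μ
    with hGdef
  set g : ℤ_[p] → ℝ := fun x₁ => if ‖x₁‖ ≤ r then 1 else 0 with hgdef
  set h : ℤ_[p] × ℤ_[p] → ℝ := fun y => (‖G y‖) ^ 2 with hhdef
  set C : ℝ := ((p : ℝ) ^ (m : ℕ)) ^ 2 with hCdef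
  have hC0 : 0 ≤ C := sq_nonneg _
  -- continuity of G
  have hGcont : Continuous G := by
    apply continuous_of_dominated (bound := fun _ => (1 : ℝ))
    · intro y
      refine (hecont.comp ?_).aestronglyMeasurable
      exact ((continuous_const.mul hcoe).add
        ((continuous_const.mul (hcoe.pow 2)).div_const 2))
    · intro y
      exact Filter.Eventually.of_forall fun u => le_of_eq (e_norm he_abs _)
    · exact integrable_const 1
    · refine Filter.Eventually.of_forall fun u => hecont.comp ?_
      exact Continuous.add
        ((continuous_const.mul (hcoe.comp continuous_snd)).mul continuous_const)
        ((continuous_const.mul (hcoe.comp continuous_fst)).mul continuous_const |>.div_const 2)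
  have hGle : ∀ y, ‖G y‖ ≤ 1 :=
    fun y => norm_int_le_one' μ hμ_norm he_abs _ (fun u => le_of_eq (e_norm he_abs _))
  have hgle : ∀ x₁, 0 ≤ g x₁ ∧ g x₁ ≤ 1 := by
    intro x₁; rw [hgdef]; dsimp only; split_ifs <;> norm_num
  have hhle : ∀ y, 0 ≤ h y ∧ h y ≤ 1 := by
    intro y
    constructor
    · exact sq_nonneg _
    · rw [hhdef]; dsimp only
      have := hGle y
      nlinarith [norm_nonneg (G y)]
  -- measurability bits
  have hball : MeasurableSet {x : ℤ_[p] | ‖x‖ ≤ r} := by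
    have : {x : ℤ_[p] | ‖x‖ ≤ r} = Metric.closedBall 0 r := by
      ext x; simp [Metric.mem_closedBall, dist_eq_norm]
    rw [this]; exact measurableSet_closedBall
  have hgmeas : Measurable g := Measurable.ite hball measurable_const measurable_const
  have hhcont : Continuous h := (continuous_norm.comp hGcont).pow 2
  -- pointwise identity
  have hpt : ∀ x : ℤ_[p] × ℤ_[p] × ℤ_[p] × ℤ_[p],
      (‖(((p : ℂ) ^ (m : ℕ)) *
        e (ξ₂ * (x.2.1 : ℚ_[p]) + ξ₄ * (x.2.2.2 : ℚ_[p])) *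
        (if ‖x.1‖ ≤ (p : ℝ) ^ (-(m : ℤ)) then 1 else 0) *
        ∫ u : ℤ_[p],
          e (ξ₄ * (x.2.2.1 : ℚ_[p]) * (u : ℚ_[p]) +
            ξ₄ * (x.2.1 : ℚ_[p]) * (u : ℚ_[p]) ^ 2 / 2) ∂μ)‖) ^ 2
      = C * g x.1 * h (x.2.1, x.2.2.1) := by
    intro x
    have hGx : (∫ u : ℤ_[p], e (ξ₄ * (x.2.2.1 : ℚ_[p]) * (u : ℚ_[p]) +
        ξ₄ * (x.2.1 : ℚ_[p]) * (u : ℚ_[p]) ^ 2 / 2) ∂μ) = G (x.2.1, x.2.2.1) := rfl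
    rw [hGx]
    by_cases hx : ‖x.1‖ ≤ r
    · rw [if_pos (by rwa [hr] at hx), hgdef]
      simp only [norm_mul, norm_pow, Complex.norm_natCast, he_abs, if_pos hx, mul_one, norm_one]
      rw [hhdef, hCdef]
      ring
    · rw [if_neg (by rwa [hr] at hx), hgdef]
      simp only [norm_mul, norm_pow, Complex.norm_natCast, he_abs, if_neg hx, norm_zero,
        mul_zero, zero_mul]
      norm_num
  rw [integral_congr_ae (Filter.Eventually.of_forall hpt)]
  -- integrability of the factored integrand on each product level
  have hmeas3 : Measurable fun y : ℤ_[p] × ℤ_[p] × ℤ_[p] => h (y.1, y.2.1) :=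
    hhcont.measurable.comp (measurable_fst.prodMk (measurable_fst.comp measurable_snd))
  have hint4 : Integrable (fun x : ℤ_[p] × ℤ_[p] × ℤ_[p] × ℤ_[p] =>
      C * g x.1 * h (x.2.1, x.2.2.1)) (μ.prod (μ.prod (μ.prod μ))) := by
    apply integrable_bdd (C := C)
    · refine Measurable.aestronglyMeasurable ?_
      exact ((measurable_const.mul (hgmeas.comp measurable_fst)).mul
        (hhcont.measurable.comp ((measurable_fst.comp measurable_snd).prodMk
          (measurable_fst.comp (measurable_snd.comp measurable_snd)))))
    · intro x
      rw [Real.norm_eq_abs, abs_mul, abs_mul, abs_of_nonneg hC0,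
        abs_of_nonneg (hgle x.1).1, abs_of_nonneg (hhle _).1]
      calc C * g x.1 * h (x.2.1, x.2.2.1) ≤ (C * 1) * 1 :=
            mul_le_mul (mul_le_mul le_rfl (hgle x.1).2 (hgle x.1).1 hC0)
              (hhle _).2 (hhle _).1 (mul_nonneg hC0 zero_le_one)
        _ = C := by ring
  rw [integral_prod _ hint4]
  -- inner triple integral
  have hK : ∀ x₂ : ℤ_[p], ∫ x₃, h (x₂, x₃) ∂μ = (p : ℝ) ^ (-(m : ℤ)) :=
    fun x₂ => gauss_L2_inner μ hμ_inv hμ_norm he_add he_abs he_ker hp ξ₄ m hξ₄ x₂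
  have hinner : ∀ x₁ : ℤ_[p],
      (∫ y : ℤ_[p] × ℤ_[p] × ℤ_[p], C * g x₁ * h (y.1, y.2.1) ∂(μ.prod (μ.prod μ)))
        = C * g x₁ * ((p : ℝ) ^ (-(m : ℤ))) := by
    intro x₁
    rw [integral_const_mul]
    congr 1
    have hint3 : Integrable (fun y : ℤ_[p] × ℤ_[p] × ℤ_[p] => h (y.1, y.2.1))
        (μ.prod (μ.prod μ)) := by
      apply integrable_bdd (C := (1 : ℝ))
      · exact hmeas3.aestronglyMeasurable
      · intro y
        rw [Real.norm_eq_abs, abs_of_nonneg (hhle _).1]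
        exact (hhle _).2
    rw [integral_prod _ hint3]
    have : ∀ x₂ : ℤ_[p], (∫ z : ℤ_[p] × ℤ_[p], h (x₂, z.1) ∂(μ.prod μ))
        = (p : ℝ) ^ (-(m : ℤ)) := by
      intro x₂
      have hint2 : Integrable (fun z : ℤ_[p] × ℤ_[p] => h (x₂, z.1)) (μ.prod μ) := by
        apply integrable_bdd (C := (1 : ℝ))
        · exact (hhcont.measurable.comp
            (measurable_const.prodMk measurable_fst)).aestronglyMeasurable
        · intro z
          rw [Real.norm_eq_abs, abs_of_nonneg (hhle _).1]
          exact (hhle _).2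
      rw [integral_prod _ hint2]
      have : ∀ x₃ : ℤ_[p], (∫ _x₄ : ℤ_[p], h (x₂, x₃) ∂μ) = h (x₂, x₃) := by
        intro x₃; rw [integral_const, measureReal_def, measure_univ, ENNReal.toReal_one, one_smul]
      rw [integral_congr_ae (Filter.Eventually.of_forall this)]
      exact hK x₂
    rw [integral_congr_ae (Filter.Eventually.of_forall this)]
    rw [integral_const, measureReal_def, measure_univ, ENNReal.toReal_one, one_smul]
  rw [integral_congr_ae (Filter.Eventually.of_forall hinner)]
  -- the x₁ integral of the indicator
  have hg_int : ∫ x₁, g x₁ ∂μ = (p : ℝ) ^ (-(m : ℤ)) := by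
    have hind : ∀ x₁ : ℤ_[p], g x₁
        = Set.indicator {x : ℤ_[p] | ‖x‖ ≤ r} (fun _ => (1 : ℝ)) x₁ := by
      intro x₁
      rw [hgdef]; dsimp only
      by_cases hx : ‖x₁‖ ≤ r
      · rw [if_pos hx]
        exact (Set.indicator_of_mem (s := {x : ℤ_[p] | ‖x‖ ≤ r}) (a := x₁) hx
          (fun _ => (1 : ℝ))).symm
      · rw [if_neg hx]
        exact (Set.indicator_of_notMem (s := {x : ℤ_[p] | ‖x‖ ≤ r}) (a := x₁) hx
          (fun _ => (1 : ℝ))).symm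
    rw [integral_congr_ae (Filter.Eventually.of_forall hind)]
    rw [integral_indicator_const _ hball]
    have hmb := measure_ball_eq' μ hμ_inv hμ_norm m
    rw [← hr] at hmb
    rw [measureReal_def, hmb, smul_eq_mul, mul_one]
    have hh : ((p : ENNReal) ^ m).toReal = (p : ℝ) ^ m := by simp
    rw [ENNReal.toReal_inv, hh, zpow_neg, zpow_natCast]
  have hfinal : ∀ x₁ : ℤ_[p], C * g x₁ * ((p : ℝ) ^ (-(m : ℤ)))
      = (C * ((p : ℝ) ^ (-(m : ℤ)))) * g x₁ := fun x₁ => by ring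
  rw [integral_congr_ae (Filter.Eventually.of_forall hfinal), integral_const_mul, hg_int]
  rw [hCdef]
  have hppos : (0 : ℝ) < (p : ℝ) := by exact_mod_cast (Fact.out : p.Prime).pos
  rw [zpow_neg, zpow_natCast]
  field_simp
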